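/- Let m ≥ 0 with 2m ∈ ℤ and let λ be a partition of n. Then there exist a partition ν whose Young diagram is contained in that of λ, an integer s ≥ 0, and pairwise distinct values l_1 > l_2 > … > l_s ≥ 0 with each l_i − m ∈ ℤ (so l_i ∈ ℤ_{≥0} if m ∈ ℤ, and l_i ∈ ℤ_{≥0} + 1/2 otherwise), such that T_m(ν) is residual and, as multisets, the entries of T_m(λ) equal the entries of T_m(ν) together with the multisets H_{l_1}, …, H_{l_s}, where H_l = {|x| : x ∈ ℤ, −l ≤ x ≤ l} = {0, 1, 1, 2, 2, …, l, l} if m ∈ ℤ and H_l = {|x| : x ∈ ℤ + 1/2, −l ≤ x ≤ l} = {1/2, 1/2, 3/2, 3/2, …, l, l} if m ∉ ℤ. In particular |ν| = n − Σ_{i=1}^s (2 l_i + 1), and the numbers 2 l_i + 1 are pairwise distinct, all odd when m ∈ ℤ and all even when m ∉ ℤ. -/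

import Mathlib

open scoped Classical

/-- `lam` is a partition of `n`: a weakly decreasing, eventually-zero function
`ℕ → ℕ` recording the parts (0-indexed), whose sum of parts is `n`. -/
def IsPartitionOf (lam : ℕ → ℕ) (n : ℕ) : Prop :=
  Antitone lam ∧ ∃ N, (∀ i, N ≤ i → lam i = 0) ∧ ∑ i ∈ Finset.range N, lam i = n

/-- The multiplicity `M_l` of the entry `l` in the `m`-tableau `T_m(λ)`:
the number of boxes `(i,j)` (0-indexed, `j < lam i`) whose entry
`|i - j + m|` equals `l`. -/
noncomputable def Mmult (lam : ℕ → ℕ) (m : ℝ) (l : ℝ) : ℕ :=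
  Set.ncard {p : ℕ × ℕ | p.2 < lam p.1 ∧ |(p.1 : ℝ) - (p.2 : ℝ) + m| = l}

/-- The `m`-tableau of `lam` is residual.  The entry values range over `m + ℤ`
(that is, over `ℤ` when `m ∈ ℤ` and over `ℤ + 1/2` when `m` is a half-integer):
(i) `M_l - M_{l+1} ∈ {0,1}` for all entry-values `l > 0` with `l ≥ m`;
(ii) `M_{l+1} - M_l ∈ {0,1}` for all entry-values `l` with `0 < l ≤ m - 1`;
(iii) when `m` is an integer, `M_0 = ⌊M_1/2⌋` if `m ≥ 1` and
`M_0 = ⌊(M_1+1)/2⌋` if `m = 0`. -/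
def Residual (lam : ℕ → ℕ) (m : ℝ) : Prop :=
  (∀ l : ℝ, (∃ c : ℤ, l = m + c) → 0 < l → m ≤ l →
      Mmult lam m (l + 1) ≤ Mmult lam m l ∧
      Mmult lam m l ≤ Mmult lam m (l + 1) + 1) ∧
  (∀ l : ℝ, (∃ c : ℤ, l = m + c) → 0 < l → l ≤ m - 1 →
      Mmult lam m l ≤ Mmult lam m (l + 1) ∧
      Mmult lam m (l + 1) ≤ Mmult lam m l + 1) ∧
  ((∃ c : ℤ, m = (c : ℝ)) →
      (m = 0 → Mmult lam m 0 = (Mmult lam m 1 + 1) / 2) ∧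
      (m ≠ 0 → Mmult lam m 0 = Mmult lam m 1 / 2))

/-- The set `J⁺` of positive jumps of a residual `m`-tableau. -/
def Jpos (lam : ℕ → ℕ) (m : ℝ) : Set ℝ :=
  {l : ℝ | (∃ c : ℤ, l = m + c) ∧ 0 < l ∧
    ((m ≤ l ∧ Mmult lam m l = Mmult lam m (l + 1) + 1) ∨
     (l ≤ m - 1 ∧ Mmult lam m l = Mmult lam m (l + 1)))}

/-- The multiplicity of the value `x` in the "hook" multiset
`H_l = {|y| : y ∈ l - ℤ, -l ≤ y ≤ l}` (so `H_l = {0,1,1,…,l,l}` when `l ∈ ℤ`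
and `H_l = {1/2,1/2,…,l,l}` when `l ∈ ℤ + 1/2`). -/
noncomputable def hookMult (l : ℝ) (x : ℝ) : ℕ :=
  Set.ncard {k : ℤ | -l ≤ l - (k : ℝ) ∧ l - (k : ℝ) ≤ l ∧ |l - (k : ℝ)| = x}


/-- A downward-closed finite set of naturals is an initial segment. -/
lemma dc_mem_iff {S : Set ℕ} (hfin : S.Finite)
    (hdc : ∀ i ∈ S, ∀ j, j ≤ i → j ∈ S) : ∀ k, k ∈ S ↔ k < S.ncard := by
  intro k
  constructor
  · intro hk
    have hsub : Set.Iic k ⊆ S := fun j hj => hdc k hk j hj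
    have h1 : (Set.Iic k).ncard ≤ S.ncard := Set.ncard_le_ncard hsub hfin
    have h2 : (Set.Iic k).ncard = k + 1 := by
      rw [← Nat.card_coe_set_eq, Nat.card_eq_card_toFinset]
      simp
    omega
  · intro hk
    by_contra hkS
    have hsub : S ⊆ Set.Iio k := by
      intro x hx
      simp only [Set.mem_Iio]
      by_contra hx'
      push_neg at hx'
      exact hkS (hdc x hx k hx')
    have h1 : S.ncard ≤ (Set.Iio k).ncard := Set.ncard_le_ncard hsub (Set.finite_Iio k)
    have h2 : (Set.Iio k).ncard = k := by
      rw [← Nat.card_coe_set_eq, Nat.card_eq_card_toFinset]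
      simp
    omega

/-- ncard of an integer interval realized inside ℕ. -/
lemma ncard_int_ico (a b : ℤ) (ha : 0 ≤ a) :
    Set.ncard {i : ℕ | a ≤ (i : ℤ) ∧ (i : ℤ) < b} = (b - a).toNat := by
  classical
  have hset : {i : ℕ | a ≤ (i : ℤ) ∧ (i : ℤ) < b} = ↑(Finset.Ico a.toNat b.toNat) := by
    ext i
    simp only [Finset.coe_Ico, Set.mem_Ico, Set.mem_setOf_eq]
    omega
  rw [hset, Set.ncard_coe_finset, Nat.card_Ico]
  omega

def Profile (g : ℤ → ℕ) : Prop :=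
  (∀ d : ℤ, 0 ≤ d → g (d + 1) ≤ g d ∧ g d ≤ g (d + 1) + 1) ∧
  (∀ d : ℤ, d < 0 → g d ≤ g (d + 1) ∧ g (d + 1) ≤ g d + 1)

def Supp (g : ℤ → ℕ) (N : ℕ) : Prop := ∀ d : ℤ, (N : ℤ) ≤ |d| → g d = 0

lemma profile_anti_right {g : ℤ → ℕ} (hg : Profile g) {a b : ℤ} (ha : 0 ≤ a)
    (hab : a ≤ b) : g b ≤ g a :=
  Int.le_induction (motive := fun b _ => g b ≤ g a) (le_refl _)
    (fun n hn ih => le_trans (hg.1 n (le_trans ha hn)).1 ih) b hab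

lemma profile_step_right {g : ℤ → ℕ} (hg : Profile g) {a b : ℤ} (ha : 0 ≤ a)
    (hab : a ≤ b) : g a ≤ g b + (b - a).toNat := by
  refine Int.le_induction (motive := fun b _ => g a ≤ g b + (b - a).toNat) (by simp) ?_ b hab
  intro n hn ih
  have h2 := (hg.1 n (le_trans ha hn)).2
  have h3 : (n + 1 - a).toNat = (n - a).toNat + 1 := by omega
  omega

lemma profile_mono_left {g : ℤ → ℕ} (hg : Profile g) {a b : ℤ} (hab : a ≤ b)
    (hb : b ≤ 0) : g a ≤ g b := by
  refine Int.le_induction (motive := fun b _ => b ≤ 0 → g a ≤ g b) (fun _ => le_refl _)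
    ?_ b hab hb
  intro n hn ih hn1
  exact le_trans (ih (by omega)) (hg.2 n (by omega)).1

lemma profile_step_left {g : ℤ → ℕ} (hg : Profile g) {a b : ℤ} (hab : a ≤ b)
    (hb : b ≤ 0) : g b ≤ g a + (b - a).toNat := by
  refine Int.le_induction (motive := fun b _ => b ≤ 0 → g b ≤ g a + (b - a).toNat)
    (fun _ => by simp) ?_ b hab hb
  intro n hn ih hn1
  have h2 := (hg.2 n (by omega)).2
  have ih' := ih (by omega)
  have h3 : (n + 1 - a).toNat = (n - a).toNat + 1 := by omega
  omega

lemma profile_bound {g : ℤ → ℕ} {N : ℕ} (hg : Profile g) (hs : Supp g N) :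
    ∀ d : ℤ, g d ≠ 0 → (g d : ℤ) + |d| ≤ (N : ℤ) := by
  intro d hd0
  rcases le_or_gt 0 d with hd | hd
  · rw [abs_of_nonneg hd]
    rcases le_or_gt (N : ℤ) d with h | h
    · exact absurd (hs d (by rw [abs_of_nonneg hd]; exact h)) hd0
    · have := profile_step_right hg hd (le_of_lt h)
      rw [hs N (by simp)] at this
      omega
  · rw [abs_of_neg hd]
    rcases le_or_gt d (-(N : ℤ)) with h | h
    · exact absurd (hs d (by rw [abs_of_neg hd]; omega)) hd0
    · have := profile_step_left hg (le_of_lt h) (le_of_lt hd)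
      rw [hs (-(N:ℤ)) (by rw [abs_of_nonpos (by omega)]; omega)] at this
      omega

noncomputable def gOf (lam : ℕ → ℕ) (d : ℤ) : ℕ :=
  Set.ncard {i : ℕ | d ≤ (i : ℤ) ∧ (i : ℤ) - d < (lam i : ℤ)}

section gof
variable {lam : ℕ → ℕ} {N₀ : ℕ}

lemma R_subset (hvan : ∀ i, N₀ ≤ i → lam i = 0) (d : ℤ) :
    {i : ℕ | d ≤ (i : ℤ) ∧ (i : ℤ) - d < (lam i : ℤ)} ⊆ ↑(Finset.range N₀) := by
  intro i hi
  simp only [Finset.coe_range, Set.mem_Iio]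
  by_contra h
  push_neg at h
  have := hvan i h
  simp only [Set.mem_setOf_eq] at hi
  omega

lemma R_finite (hvan : ∀ i, N₀ ≤ i → lam i = 0) (d : ℤ) :
    {i : ℕ | d ≤ (i : ℤ) ∧ (i : ℤ) - d < (lam i : ℤ)}.Finite :=
  Set.Finite.subset (Finset.range N₀).finite_toSet (R_subset hvan d)

lemma gOf_eq_card (hvan : ∀ i, N₀ ≤ i → lam i = 0) {P : ℕ} (hP : N₀ ≤ P) (d : ℤ) :
    gOf lam d =
      ((Finset.range P).filter
        (fun i : ℕ => d ≤ (i : ℤ) ∧ (i : ℤ) - d < (lam i : ℤ))).card := by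
  rw [gOf, ← Set.ncard_coe_finset]
  congr 1
  ext i
  simp only [Set.mem_setOf_eq, Finset.coe_filter, Finset.mem_range]
  constructor
  · intro h
    refine ⟨?_, h⟩
    have := R_subset hvan d h
    simp only [Finset.coe_range, Set.mem_Iio] at this
    omega
  · exact fun h => h.2

/-- Interval structure of the diagonal row-sets. -/
lemma mem_R_iff (hanti : Antitone lam) (hvan : ∀ i, N₀ ≤ i → lam i = 0) (d : ℤ) (i : ℕ) :
    (d ≤ (i : ℤ) ∧ (i : ℤ) - d < (lam i : ℤ)) ↔
      (max d 0 ≤ (i : ℤ) ∧ (i : ℤ) < max d 0 + gOf lam d) := by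
  set b : ℕ := d.toNat with hb
  have hbd : (b : ℤ) = max d 0 := by omega
  set S : Set ℕ := {i : ℕ | d ≤ (i : ℤ) ∧ (i : ℤ) - d < (lam i : ℤ)} with hS
  set T : Set ℕ := {k : ℕ | (k + b) ∈ S} with hT
  have hSfin : S.Finite := R_finite hvan d
  have hTfin : T.Finite := by
    have : T = (fun k => k + b) ⁻¹' S := rfl
    rw [this]
    exact Set.Finite.preimage (Set.injOn_of_injective (add_left_injective b)) hSfin
  have hSb : ∀ j ∈ S, b ≤ j := by
    intro j hj
    simp only [hS, Set.mem_setOf_eq] at hj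
    omega
  have himg : S = (fun k => k + b) '' T := by
    ext j
    constructor
    · intro hj
      exact ⟨j - b, by simpa [hT, Nat.sub_add_cancel (hSb j hj)] using hj,
        Nat.sub_add_cancel (hSb j hj)⟩
    · rintro ⟨k, hk, rfl⟩
      exact hk
  have hcard : T.ncard = gOf lam d := by
    rw [gOf, ← hS, himg, Set.ncard_image_of_injective _ (add_left_injective b)]
  have hdc : ∀ k ∈ T, ∀ k', k' ≤ k → k' ∈ T := by
    intro k hk k' hk'
    simp only [hT, hS, Set.mem_setOf_eq] at hk ⊢
    have hl : lam (k + b) ≤ lam (k' + b) := hanti (by omega)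
    have hl' : (lam (k + b) : ℤ) ≤ (lam (k' + b) : ℤ) := by exact_mod_cast hl
    constructor
    · omega
    · push_cast
      push_cast at hk
      omega
  have hmem : ∀ k, k ∈ T ↔ k < gOf lam d := by
    rw [← hcard]
    exact dc_mem_iff hTfin hdc
  constructor
  · intro h
    have hbi : b ≤ i := hSb i h
    have hm : (i - b) ∈ T := by
      simp only [hT, Set.mem_setOf_eq, Nat.sub_add_cancel hbi]
      exact h
    rw [hmem] at hm
    omega
  · rintro ⟨h1, h2⟩
    have hbi : b ≤ i := by omega
    have hm : (i - b) ∈ T := by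
      rw [hmem]
      omega
    simp only [hT, Set.mem_setOf_eq, Nat.sub_add_cancel hbi] at hm
    exact hm

/-- Box criterion: `(i,j)` is a box of `lam` iff `min i j < g(i-j)`. -/
lemma box_crit (hanti : Antitone lam) (hvan : ∀ i, N₀ ≤ i → lam i = 0) (i j : ℕ) :
    j < lam i ↔ min i j < gOf lam ((i : ℤ) - j) := by
  have h := mem_R_iff hanti hvan ((i : ℤ) - j) i
  rcases le_or_gt j i with hji | hji
  · have hmax : max ((i : ℤ) - j) 0 = (i : ℤ) - j := by omega
    rw [hmax] at h
    constructor
    · intro hlt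
      have := (h.mp ⟨by omega, by omega⟩).2
      omega
    · intro hlt
      have h2 := h.mpr ⟨by omega, by omega⟩
      omega
  · have hmax : max ((i : ℤ) - j) 0 = 0 := by omega
    rw [hmax] at h
    constructor
    · intro hlt
      have := (h.mp ⟨by omega, by omega⟩).2
      omega
    · intro hlt
      have h2 := h.mpr ⟨by omega, by omega⟩
      omega

/-- The diagonal counts of a partition form a profile. -/
lemma profile_gOf (hanti : Antitone lam) (hvan : ∀ i, N₀ ≤ i → lam i = 0) :
    (∀ d : ℤ, 0 ≤ d → gOf lam (d + 1) ≤ gOf lam d ∧ gOf lam d ≤ gOf lam (d + 1) + 1) ∧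
    (∀ d : ℤ, d < 0 → gOf lam d ≤ gOf lam (d + 1) ∧ gOf lam (d + 1) ≤ gOf lam d + 1) := by
  have hfin : ∀ d : ℤ, {i : ℕ | d ≤ (i : ℤ) ∧ (i : ℤ) - d < (lam i : ℤ)}.Finite :=
    R_finite hvan
  have hsucc : ∀ d : ℤ, {i : ℕ | (d+1) ≤ (i : ℤ) ∧ (i : ℤ) - (d+1) < (lam i : ℤ)} ⊆
      (fun i => i + 1) '' {i : ℕ | d ≤ (i : ℤ) ∧ (i : ℤ) - d < (lam i : ℤ)} ∪ {0} := by
    intro d i hi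
    simp only [Set.mem_setOf_eq] at hi
    rcases Nat.eq_zero_or_pos i with h0 | h0
    · exact Or.inr (by simp [h0])
    · left
      refine ⟨i - 1, ?_, show i - 1 + 1 = i by omega⟩
      simp only [Set.mem_setOf_eq]
      have hl : lam i ≤ lam (i - 1) := hanti (by omega)
      have hl' : (lam i : ℤ) ≤ (lam (i-1) : ℤ) := by exact_mod_cast hl
      push_cast [h0]
      push_cast at hi
      omega
  constructor
  · intro d hd
    constructor
    · -- g(d+1) ≤ g(d) : S_{d+1} ⊆ succ '' S_d for d ≥ 0
      rw [gOf, gOf]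
      have hsub : {i : ℕ | (d+1) ≤ (i : ℤ) ∧ (i : ℤ) - (d+1) < (lam i : ℤ)} ⊆
          (fun i => i + 1) '' {i : ℕ | d ≤ (i : ℤ) ∧ (i : ℤ) - d < (lam i : ℤ)} := by
        intro i hi
        have := hsucc d hi
        rcases this with h | h
        · exact h
        · exfalso
          simp only [Set.mem_singleton_iff] at h
          simp only [Set.mem_setOf_eq, h] at hi
          omega
      calc Set.ncard {i : ℕ | (d+1) ≤ (i : ℤ) ∧ (i : ℤ) - (d+1) < (lam i : ℤ)}
          ≤ Set.ncard ((fun i => i + 1) ''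
              {i : ℕ | d ≤ (i : ℤ) ∧ (i : ℤ) - d < (lam i : ℤ)}) :=
            Set.ncard_le_ncard hsub (Set.Finite.image _ (hfin d))
        _ = _ := Set.ncard_image_of_injective _ (add_left_injective 1)
    · -- g(d) ≤ g(d+1) + 1 : S_d ⊆ S_{d+1} ∪ {d.toNat}
      rw [gOf, gOf]
      have hsub : {i : ℕ | d ≤ (i : ℤ) ∧ (i : ℤ) - d < (lam i : ℤ)} ⊆
          {i : ℕ | (d+1) ≤ (i : ℤ) ∧ (i : ℤ) - (d+1) < (lam i : ℤ)} ∪ {d.toNat} := by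
        intro i hi
        simp only [Set.mem_setOf_eq, Set.mem_union, Set.mem_singleton_iff] at hi ⊢
        rcases eq_or_ne i d.toNat with h | h
        · exact Or.inr h
        · exact Or.inl ⟨by omega, by omega⟩
      calc Set.ncard {i : ℕ | d ≤ (i : ℤ) ∧ (i : ℤ) - d < (lam i : ℤ)}
          ≤ Set.ncard ({i : ℕ | (d+1) ≤ (i : ℤ) ∧ (i : ℤ) - (d+1) < (lam i : ℤ)} ∪ {d.toNat}) :=
            Set.ncard_le_ncard hsub (Set.Finite.union (hfin (d+1)) (Set.finite_singleton _))
        _ ≤ _ := by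
            apply le_trans (Set.ncard_union_le _ _)
            simp
  · intro d hd
    constructor
    · -- g(d) ≤ g(d+1) via id
      apply Set.ncard_le_ncard
      · intro i hi
        simp only [Set.mem_setOf_eq] at hi ⊢
        omega
      · exact hfin (d+1)
    · -- g(d+1) ≤ g(d) + 1
      rw [gOf, gOf]
      calc Set.ncard {i : ℕ | (d+1) ≤ (i : ℤ) ∧ (i : ℤ) - (d+1) < (lam i : ℤ)}
          ≤ Set.ncard ((fun i => i + 1) ''
              {i : ℕ | d ≤ (i : ℤ) ∧ (i : ℤ) - d < (lam i : ℤ)} ∪ {0}) :=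
            Set.ncard_le_ncard (hsucc d)
              (Set.Finite.union (Set.Finite.image _ (hfin d)) (Set.finite_singleton _))
        _ ≤ Set.ncard ((fun i => i + 1) ''
              {i : ℕ | d ≤ (i : ℤ) ∧ (i : ℤ) - d < (lam i : ℤ)}) + 1 := by
            apply le_trans (Set.ncard_union_le _ _)
            simp
        _ = _ := by rw [Set.ncard_image_of_injective _ (add_left_injective 1)]

/-- Support bound for `gOf`. -/
lemma supp_gOf (hanti : Antitone lam) (hvan : ∀ i, N₀ ≤ i → lam i = 0) :
    ∀ d : ℤ, ((N₀ + lam 0 : ℕ) : ℤ) ≤ |d| → gOf lam d = 0 := by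
  intro d hd
  rw [gOf, Set.ncard_eq_zero (R_finite hvan d)]
  ext i
  simp only [Set.mem_setOf_eq, Set.mem_empty_iff_false, iff_false]
  rintro ⟨h1, h2⟩
  have hle : lam i ≤ lam 0 := hanti (Nat.zero_le i)
  rcases le_or_gt 0 d with h | h
  · rw [abs_of_nonneg h] at hd
    have : N₀ ≤ i := by omega
    have := hvan i this
    omega
  · rw [abs_of_neg h] at hd
    omega
end gof
section sumg
variable {lam : ℕ → ℕ} {N₀ : ℕ}

lemma sum_gOf (hanti : Antitone lam) (hvan : ∀ i, N₀ ≤ i → lam i = 0) {P : ℕ}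
    (hP : N₀ + lam 0 ≤ P) :
    ∑ d ∈ Finset.Icc (-(P : ℤ)) (P : ℤ), gOf lam d = ∑ i ∈ Finset.range P, lam i := by
  classical
  set T : Finset (ℕ × ℕ) :=
    (Finset.range P ×ˢ Finset.range P).filter (fun p : ℕ × ℕ => p.2 < lam p.1) with hT
  have hA : T.card = ∑ i ∈ Finset.range P, lam i := by
    rw [Finset.card_eq_sum_card_fiberwise (f := Prod.fst) (t := Finset.range P)
      (by intro p hp; simp only [Finset.mem_coe, hT, Finset.mem_filter, Finset.mem_product] at hp
          exact hp.1.1)]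
    apply Finset.sum_congr rfl
    intro i hi
    rw [← Finset.card_range (lam i)]
    apply Finset.card_bij (fun (p : ℕ × ℕ) _ => p.2)
    · intro p hp
      simp only [hT, Finset.mem_filter, Finset.mem_product, Finset.mem_range] at hp ⊢
      obtain ⟨⟨⟨_, _⟩, h3⟩, h4⟩ := hp
      subst h4
      exact h3
    · intro p₁ hp₁ p₂ hp₂ hq
      simp only [hT, Finset.mem_filter] at hp₁ hp₂
      exact Prod.ext (hp₁.2.trans hp₂.2.symm) hq
    · intro j hj
      simp only [Finset.mem_range] at hj hi
      refine ⟨(i, j), ?_, rfl⟩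
      simp only [hT, Finset.mem_filter, Finset.mem_product, Finset.mem_range]
      have : lam i ≤ lam 0 := hanti (Nat.zero_le i)
      exact ⟨⟨⟨hi, by omega⟩, hj⟩, trivial⟩
  have hB : T.card = ∑ d ∈ Finset.Icc (-(P : ℤ)) (P : ℤ), gOf lam d := by
    rw [Finset.card_eq_sum_card_fiberwise (f := fun p : ℕ × ℕ => (p.1 : ℤ) - p.2)
      (t := Finset.Icc (-(P : ℤ)) (P : ℤ))
      (by intro p hp
          simp only [Finset.mem_coe, hT, Finset.mem_filter, Finset.mem_product, Finset.mem_range] at hp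
          simp only [Finset.mem_coe, Finset.mem_Icc]
          omega)]
    apply Finset.sum_congr rfl
    intro d hd
    rw [gOf_eq_card hvan (show N₀ ≤ P by omega) d]
    apply Finset.card_bij (fun (p : ℕ × ℕ) _ => p.1)
    · intro p hp
      simp only [hT, Finset.mem_filter, Finset.mem_product, Finset.mem_range] at hp ⊢
      obtain ⟨⟨⟨h1, h2⟩, h3⟩, h4⟩ := hp
      exact ⟨h1, by omega, by omega⟩
    · intro p₁ hp₁ p₂ hp₂ hq
      simp only [hT, Finset.mem_filter] at hp₁ hp₂
      have e1 : (p₁.2 : ℤ) = (p₁.1 : ℤ) - d := by omega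
      have e2 : (p₂.2 : ℤ) = (p₂.1 : ℤ) - d := by omega
      apply Prod.ext hq
      omega
    · intro i hi
      simp only [Finset.mem_filter, Finset.mem_range] at hi
      obtain ⟨h1, h2, h3⟩ := hi
      refine ⟨(i, ((i : ℤ) - d).toNat), ?_, rfl⟩
      simp only [hT, Finset.mem_filter, Finset.mem_product, Finset.mem_range]
      have hl : lam i ≤ lam 0 := hanti (Nat.zero_le i)
      refine ⟨⟨⟨h1, by omega⟩, by omega⟩, by omega⟩
  omega
end sumg
noncomputable def nuOf (g : ℤ → ℕ) (i : ℕ) : ℕ :=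
  Set.ncard {j : ℕ | min i j < g ((i : ℤ) - j)}

section nuof
variable {g : ℤ → ℕ} {N : ℕ}

lemma box_dc_row_step (hg : Profile g) {i j : ℕ}
    (h : min i (j + 1) < g ((i : ℤ) - (j + 1))) : min i j < g ((i : ℤ) - j) := by
  rcases le_or_gt ((j : ℤ) + 1) i with hd | hd
  · have hd0 : (0 : ℤ) ≤ (i : ℤ) - j - 1 := by omega
    have h2 := (hg.1 ((i : ℤ) - j - 1) hd0).2
    have he : ((i : ℤ) - j - 1) + 1 = (i : ℤ) - j := by ring
    rw [he] at h2
    have hmin : min i (j + 1) = j + 1 := by omega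
    have hmin2 : min i j = j := by omega
    rw [hmin] at h
    have h3 : (i : ℤ) - (j + 1) = (i : ℤ) - j - 1 := by push_cast; ring
    rw [h3] at h
    omega
  · have hd0 : (i : ℤ) - (j + 1) < 0 := by push_cast; omega
    have h2 := (hg.2 ((i : ℤ) - (j + 1)) hd0).1
    have he : ((i : ℤ) - (j + 1)) + 1 = (i : ℤ) - j := by push_cast; ring
    rw [he] at h2
    have hmin : min i (j + 1) = i := by omega
    have hmin2 : min i j = i := by omega
    rw [hmin] at h
    omega

lemma box_dc_row (hg : Profile g) {i : ℕ} :
    ∀ j j' : ℕ, j' ≤ j → min i j < g ((i : ℤ) - j) → min i j' < g ((i : ℤ) - j') := by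
  intro j
  induction j with
  | zero => intro j' hj' h; rw [Nat.le_zero.mp hj']; exact h
  | succ j ih =>
      intro j' hj' h
      rcases Nat.eq_or_lt_of_le hj' with he | hlt
      · subst he; exact h
      · exact ih j' (by omega) (box_dc_row_step hg h)

lemma box_dc_col_step (hg : Profile g) {i j : ℕ}
    (h : min (i + 1) j < g (((i : ℤ) + 1) - j)) : min i j < g ((i : ℤ) - j) := by
  rcases le_or_gt (j : ℤ) i with hd | hd
  · have hd0 : (0 : ℤ) ≤ (i : ℤ) - j := by omega
    have h2 := (hg.1 ((i : ℤ) - j) hd0).1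
    have he : ((i : ℤ) - j) + 1 = ((i : ℤ) + 1) - j := by ring
    rw [he] at h2
    have hmin : min (i + 1) j = j := by omega
    have hmin2 : min i j = j := by omega
    rw [hmin] at h
    omega
  · have hd0 : (i : ℤ) - j < 0 := by omega
    have h2 := (hg.2 ((i : ℤ) - j) hd0).2
    have he : ((i : ℤ) - j) + 1 = ((i : ℤ) + 1) - j := by ring
    rw [he] at h2
    have hmin : min (i + 1) j = i + 1 := by omega
    have hmin2 : min i j = i := by omega
    rw [hmin] at h
    omega

lemma nuSet_finite (hg : Profile g) (hs : Supp g N) (i : ℕ) :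
    {j : ℕ | min i j < g ((i : ℤ) - j)}.Finite := by
  apply Set.Finite.subset (Finset.range (i + N + 1)).finite_toSet
  intro j hj
  simp only [Set.mem_setOf_eq] at hj
  simp only [Finset.coe_range, Set.mem_Iio]
  have hne : g ((i : ℤ) - j) ≠ 0 := by omega
  have hb := profile_bound hg hs ((i : ℤ) - j) hne
  rcases le_or_gt (j : ℤ) i with hc | hc
  · rw [abs_of_nonneg (by omega)] at hb; omega
  · rw [abs_of_neg (by omega)] at hb; omega

lemma nu_mem_iff (hg : Profile g) (hs : Supp g N) (i : ℕ) :
    ∀ j : ℕ, min i j < g ((i : ℤ) - j) ↔ j < nuOf g i := by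
  apply dc_mem_iff (nuSet_finite hg hs i)
  intro j hj j' hj'
  exact box_dc_row hg j j' hj' hj

lemma nuOf_antitone (hg : Profile g) (hs : Supp g N) : Antitone (nuOf g) := by
  apply antitone_nat_of_succ_le
  intro i
  apply Set.ncard_le_ncard _ (nuSet_finite hg hs i)
  intro j hj
  simp only [Set.mem_setOf_eq] at hj ⊢
  have : ((i + 1 : ℕ) : ℤ) = (i : ℤ) + 1 := by push_cast; ring
  rw [this] at hj
  exact box_dc_col_step hg hj

lemma nuOf_vanish (hg : Profile g) (hs : Supp g N) :
    ∀ i, 2 * N ≤ i → nuOf g i = 0 := by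
  intro i hi
  rw [nuOf, Set.ncard_eq_zero (nuSet_finite hg hs i)]
  ext j
  simp only [Set.mem_setOf_eq, Set.mem_empty_iff_false, iff_false, not_lt]
  by_contra hcon
  push_neg at hcon
  have hne : g ((i : ℤ) - j) ≠ 0 := by omega
  have hb := profile_bound hg hs ((i : ℤ) - j) hne
  rcases le_or_gt (j : ℤ) i with hc | hc
  · rw [abs_of_nonneg (by omega)] at hb; omega
  · rw [abs_of_neg (by omega)] at hb; omega

lemma gOf_nuOf (hg : Profile g) (hs : Supp g N) : ∀ d : ℤ, gOf (nuOf g) d = g d := by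
  intro d
  rw [gOf]
  have hset : {i : ℕ | d ≤ (i : ℤ) ∧ (i : ℤ) - d < (nuOf g i : ℤ)} =
      {i : ℕ | max d 0 ≤ (i : ℤ) ∧ (i : ℤ) < max d 0 + g d} := by
    ext i
    simp only [Set.mem_setOf_eq]
    constructor
    · rintro ⟨h1, h2⟩
      set j : ℕ := ((i : ℤ) - d).toNat with hj
      have hji : (j : ℤ) = (i : ℤ) - d := by omega
      have h3 : j < nuOf g i := by omega
      have h4 := (nu_mem_iff hg hs i j).mpr h3
      have h5 : (i : ℤ) - j = d := by omega
      rw [h5] at h4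
      rcases le_or_gt 0 d with hd | hd
      · have : min i j = j := by omega
        rw [this] at h4
        constructor
        · omega
        · omega
      · have : min i j = i := by omega
        rw [this] at h4
        constructor
        · omega
        · omega
    · rintro ⟨h1, h2⟩
      have h1' : d ≤ (i : ℤ) := le_trans (le_max_left d 0) h1
      refine ⟨h1', ?_⟩
      set j : ℕ := ((i : ℤ) - d).toNat with hj
      have hji : (j : ℤ) = (i : ℤ) - d := by omega
      have h5 : (i : ℤ) - j = d := by omega
      have h4 : min i j < g ((i : ℤ) - j) := by
        rw [h5]
        rcases le_or_gt 0 d with hd | hd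
        · have : min i j = j := by omega
          omega
        · have : min i j = i := by omega
          omega
      have := (nu_mem_iff hg hs i j).mp h4
      omega
  rw [hset]
  have := ncard_int_ico (max d 0) (max d 0 + g d) (le_max_right d 0)
  rw [this]
  omega
end nuof
def Removable (μ : ℤ) (g : ℤ → ℕ) (B : ℤ) : Prop :=
  -B - μ ≤ B ∧ (∀ d : ℤ, -B - μ ≤ d → d ≤ B → 1 ≤ g d) ∧
  (0 ≤ B → g B = g (B + 1) + 1) ∧ (B < 0 → g (B + 1) = g B) ∧
  g (-B - μ) = g (-B - μ - 1) + 1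

noncomputable def cut (μ B : ℤ) (g : ℤ → ℕ) : ℤ → ℕ :=
  fun d => if -B - μ ≤ d ∧ d ≤ B then g d - 1 else g d

section removal
variable {μ B : ℤ} {g : ℤ → ℕ} {N : ℕ}

lemma cut_key (hr : Removable μ g B) :
    ∀ e : ℤ, (cut μ B g e = g e - 1 ∧ -B - μ ≤ e ∧ e ≤ B ∧ 1 ≤ g e) ∨
      (cut μ B g e = g e ∧ (e < -B - μ ∨ B < e)) := by
  intro e
  by_cases h : -B - μ ≤ e ∧ e ≤ B
  · exact Or.inl ⟨if_pos h, h.1, h.2, hr.2.1 e h.1 h.2⟩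
  · refine Or.inr ⟨if_neg h, ?_⟩
    rcases not_and_or.mp h with h' | h' <;> [left; right] <;> omega

lemma cut_out (hr : Removable μ g B) :
    ∀ e : ℤ, (e < -B - μ ∨ B < e) → cut μ B g e = g e := by
  intro e he
  apply if_neg
  rintro ⟨h1, h2⟩
  omega

lemma cut_profile (hμ : 0 ≤ μ) (hg : Profile g) (hr : Removable μ g B) :
    Profile (cut μ B g) := by
  obtain ⟨hAB, hint, hrB, hrB', hlA⟩ := hr
  have hA0 : -B - μ ≤ 0 := by omega
  have hkey := cut_key ⟨hAB, hint, hrB, hrB', hlA⟩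
  constructor
  · intro d hd
    have h1 := hg.1 d hd
    rcases hkey d with ⟨e1, m1⟩ | ⟨e1, m1⟩ <;> rcases hkey (d + 1) with ⟨e2, m2⟩ | ⟨e2, m2⟩
    · omega
    · -- d in, d+1 out: d = B, 0 ≤ B
      have hB : g d = g B := by rw [show d = B by omega]
      have hB1 : g (d + 1) = g (B + 1) := by rw [show d + 1 = B + 1 by omega]
      have := hrB (by omega)
      omega
    · -- d out, d+1 in: impossible on the right (d ≥ 0 ≥ A)
      exfalso; omega
    · omega
  · intro d hd
    have h1 := hg.2 d hd
    rcases hkey d with ⟨e1, m1⟩ | ⟨e1, m1⟩ <;> rcases hkey (d + 1) with ⟨e2, m2⟩ | ⟨e2, m2⟩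
    · omega
    · -- d in, d+1 out: d = B, B < 0
      have hB : g d = g B := by rw [show d = B by omega]
      have hB1 : g (d + 1) = g (B + 1) := by rw [show d + 1 = B + 1 by omega]
      have := hrB' (by omega)
      omega
    · -- d out, d+1 in: d + 1 = A
      have hA : g (d + 1) = g (-B - μ) := by rw [show d + 1 = -B - μ by omega]
      have hA1 : g d = g (-B - μ - 1) := by rw [show d = -B - μ - 1 by omega]
      omega
    · omega

lemma removable_bound (hg : Profile g) (hs : Supp g N) (hr : Removable μ g B) :
    B ≤ (N : ℤ) ∧ |B| < N ∧ |(-B - μ)| < N := by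
  have h1 : 1 ≤ g B := hr.2.1 B hr.1 (le_refl B)
  have h2 : 1 ≤ g (-B - μ) := hr.2.1 (-B - μ) (le_refl _) hr.1
  have hb1 := profile_bound hg hs B (by omega)
  have hb2 := profile_bound hg hs (-B - μ) (by omega)
  have ha1 : (0:ℤ) ≤ |B| := abs_nonneg B
  have ha2 : (0:ℤ) ≤ |(-B - μ)| := abs_nonneg _
  have hab : B ≤ |B| := le_abs_self B
  omega

lemma cut_removable_lt (hμ : 0 ≤ μ) (hg : Profile g) (hr : Removable μ g B)
    (hmax : ∀ B', Removable μ g B' → B' ≤ B) :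
    ∀ B', Removable μ (cut μ B g) B' → B' < B := by
  intro B' h'
  rcases lt_trichotomy B' B with h | h | h
  · exact h
  · -- B' = B : impossible
    exfalso
    subst h
    obtain ⟨hAB', hint', hrB'', hrB''', hlA'⟩ := h'
    have hin : cut μ B' g B' = g B' - 1 ∧ 1 ≤ g B' := by
      rcases cut_key hr B' with ⟨e, m⟩ | ⟨e, m⟩
      · exact ⟨e, m.2.2⟩
      · exfalso; omega
    have hout : cut μ B' g (B' + 1) = g (B' + 1) := cut_out hr (B' + 1) (by omega)
    rcases le_or_gt 0 B' with hb | hb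
    · have := hrB'' hb
      have := hr.2.2.1 hb
      omega
    · have := hrB''' hb
      have := hr.2.2.2.1 hb
      omega
  · -- B' > B: transfer removability to g, contradict maximality
    exfalso
    obtain ⟨hAB', hint', hrB'', hrB''', hlA'⟩ := h'
    have hBout : ∀ e : ℤ, (e < -B - μ ∨ B < e) → cut μ B g e = g e := cut_out hr
    have hrem : Removable μ g B' := by
      refine ⟨hAB', ?_, ?_, ?_, ?_⟩
      · intro d h1 h2
        have := hint' d h1 h2
        rcases cut_key hr d with ⟨e, m⟩ | ⟨e, m⟩ <;> omega
      · intro hb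
        have e1 := hBout B' (by omega)
        have e2 := hBout (B' + 1) (by omega)
        have := hrB'' hb
        omega
      · intro hb
        have e1 := hBout B' (by omega)
        have e2 := hBout (B' + 1) (by omega)
        have := hrB''' hb
        omega
      · have e1 := hBout (-B' - μ) (by omega)
        have e2 := hBout (-B' - μ - 1) (by omega)
        omega
    exact absurd (hmax B' hrem) (by omega)
end removal
lemma gmain (μ : ℤ) (hμ : 0 ≤ μ) (N : ℕ) :
    ∀ W : ℕ, ∀ g : ℤ → ℕ, Profile g → Supp g N →
      (∑ d ∈ Finset.Icc (-(N : ℤ)) (N : ℤ), g d) = W →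
      ∃ (g' : ℤ → ℕ) (s : ℕ) (Bs : ℕ → ℤ),
        Profile g' ∧ Supp g' N ∧ (∀ d, g' d ≤ g d) ∧
        (∀ i, i + 1 < s → Bs (i + 1) < Bs i) ∧
        (∀ i, i < s → -(Bs i) - μ ≤ Bs i) ∧
        (∀ d, g d = g' d + ∑ i ∈ Finset.range s,
            (if -(Bs i) - μ ≤ d ∧ d ≤ Bs i then 1 else 0)) ∧
        (∀ B, ¬ Removable μ g' B) ∧
        (∀ i, i < s → Removable μ g (Bs 0) ∧ ∀ B, Removable μ g B → B ≤ Bs 0) := by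
  intro W
  induction W using Nat.strong_induction_on with
  | _ W ih =>
    intro g hg hs hW
    by_cases hrem : ∃ B, Removable μ g B
    · -- pick the maximal removable B
      obtain ⟨B, hB, hBmax⟩ := Int.exists_greatest_of_bdd
        (⟨(N : ℤ), fun z hz => (removable_bound hg hs hz).1⟩) hrem
      set A : ℤ := -B - μ with hA
      have hAB : A ≤ B := hB.1
      have hbd := removable_bound hg hs hB
      -- the cut profile
      set g2 : ℤ → ℕ := cut μ B g with hg2
      have hg2prof : Profile g2 := cut_profile hμ hg hB
      have hg2le : ∀ d, g2 d ≤ g d := by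
        intro d
        have hck := cut_key hB d
        rw [← hg2] at hck
        rcases hck with ⟨e, m⟩ | ⟨e, m⟩ <;> omega
      have hg2supp : Supp g2 N := by
        intro d hd
        have := hs d hd
        have := hg2le d
        omega
      have hpt : ∀ d, g d = g2 d + (if -B - μ ≤ d ∧ d ≤ B then 1 else 0) := by
        intro d
        have hck := cut_key hB d
        rw [← hg2] at hck
        rcases hck with ⟨e, m⟩ | ⟨e, m⟩
        · rw [if_pos ⟨m.1, m.2.1⟩]; omega
        · rw [if_neg (by rintro ⟨h1, h2⟩; omega)]; omega
      have hindsum : (∑ d ∈ Finset.Icc (-(N : ℤ)) (N : ℤ),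
          (if -B - μ ≤ d ∧ d ≤ B then 1 else 0)) = (B + 1 - A).toNat := by
        rw [Finset.sum_boole]
        norm_cast
        rw [show (Finset.Icc (-(N : ℤ)) (N : ℤ)).filter (fun d => -B - μ ≤ d ∧ d ≤ B) =
          Finset.Icc A B from by
            ext d
            simp only [Finset.mem_filter, Finset.mem_Icc]
            constructor
            · rintro ⟨_, h2⟩; exact h2
            · rintro ⟨h1, h2⟩
              refine ⟨⟨?_, ?_⟩, h1, h2⟩ <;>
                (first
                  | (have := abs_le.mp (le_of_lt hbd.2.1); omega)
                  | (have := abs_le.mp (le_of_lt hbd.2.2); omega))]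
        rw [Int.card_Icc]
      have hsum2 : (∑ d ∈ Finset.Icc (-(N : ℤ)) (N : ℤ), g d) =
          (∑ d ∈ Finset.Icc (-(N : ℤ)) (N : ℤ), g2 d) + (B + 1 - A).toNat := by
        rw [← hindsum, ← Finset.sum_add_distrib]
        apply Finset.sum_congr rfl
        intro d _
        exact hpt d
      set W2 : ℕ := ∑ d ∈ Finset.Icc (-(N : ℤ)) (N : ℤ), g2 d with hW2
      have hW2lt : W2 < W := by
        have : (1 : ℤ) ≤ B + 1 - A := by omega
        omega
      obtain ⟨g', s', Bs', hp', hs', hle', hdec', hpos', hsplit', hnorem', hmax'⟩ :=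
        ih W2 hW2lt g2 hg2prof hg2supp rfl
      refine ⟨g', s' + 1, fun i => if i = 0 then B else Bs' (i - 1),
        hp', hs', fun d => le_trans (hle' d) (hg2le d), ?_, ?_, ?_, hnorem', ?_⟩
      · -- strictly decreasing
        intro i hi
        rcases Nat.eq_zero_or_pos i with h0 | h0
        · subst h0
          simp only [if_pos rfl, if_neg (Nat.one_ne_zero)]
          have hs'0 : 0 < s' := by omega
          have hrem0 : Removable μ g2 (Bs' 0) := (hmax' 0 hs'0).1
          exact cut_removable_lt hμ hg hB hBmax (Bs' 0) hrem0
        · have h1 : i ≠ 0 := by omega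
          have h2 : i + 1 ≠ 0 := by omega
          simp only [if_neg h1, if_neg h2]
          have := hdec' (i - 1) (by omega)
          rw [show i - 1 + 1 = i from by omega] at this
          rw [show i + 1 - 1 = i from by omega]
          exact this
      · -- nonnegativity of the hook lengths
        intro i hi
        rcases Nat.eq_zero_or_pos i with h0 | h0
        · subst h0; simp only [if_pos rfl]; exact hB.1
        · have h1 : i ≠ 0 := by omega
          simp only [if_neg h1]
          exact hpos' (i - 1) (by omega)
      · -- decomposition
        intro d
        rw [Finset.sum_range_succ' (fun i => if -(if i = 0 then B else Bs' (i - 1)) - μ ≤ d ∧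
              d ≤ (if i = 0 then B else Bs' (i - 1)) then 1 else 0) s']
        simp only [Nat.succ_ne_zero, if_false, if_true, Nat.add_sub_cancel, if_pos]
        have e1 := hpt d
        have e2 := hsplit' d
        omega
      · -- maximality clause
        intro i _
        simp only [if_pos rfl]
        exact ⟨hB, hBmax⟩
    · push_neg at hrem
      refine ⟨g, 0, fun _ => 0, hg, hs, fun d => le_refl _, ?_, ?_, ?_, hrem, ?_⟩
      · intro i hi; omega
      · intro i hi; omega
      · intro d; simp
      · intro i hi; omega
section mm
variable {lam : ℕ → ℕ} {N₀ : ℕ} {m x : ℝ} {μ : ℤ}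

lemma Mmult_empty
    (hx : ∀ p : ℕ × ℕ, ¬(p.2 < lam p.1 ∧ |(p.1 : ℝ) - (p.2 : ℝ) + m| = x)) :
    Mmult lam m x = 0 := by
  have h : {p : ℕ × ℕ | p.2 < lam p.1 ∧ |(p.1 : ℝ) - (p.2 : ℝ) + m| = x} = ∅ :=
    Set.eq_empty_iff_forall_notMem.mpr hx
  rw [Mmult, h, Set.ncard_empty]

lemma Mmult_nonres (h2m : 2 * m = (μ : ℝ))
    (hx : ¬ ∃ c : ℤ, x = m + (c : ℝ)) : Mmult lam m x = 0 := by
  apply Mmult_empty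
  rintro ⟨i, j⟩ ⟨h1, h2⟩
  simp only at h2
  rcases abs_choice ((i : ℝ) - j + m) with h | h <;> rw [h] at h2
  · exact hx ⟨(i : ℤ) - j, by push_cast; linarith⟩
  · exact hx ⟨-((i : ℤ) - j) - μ, by push_cast; linarith⟩

lemma Mmult_neg (hx : x < 0) : Mmult lam m x = 0 := by
  apply Mmult_empty
  rintro ⟨i, j⟩ ⟨h1, h2⟩
  simp only at h2
  have := abs_nonneg ((i : ℝ) - j + m)
  linarith

lemma D_injOn (d : ℤ) :
    Set.InjOn Prod.fst {p : ℕ × ℕ | p.2 < lam p.1 ∧ (p.1 : ℤ) - p.2 = d} := by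
  rintro ⟨i1, j1⟩ ⟨h1, e1⟩ ⟨i2, j2⟩ ⟨h2, e2⟩ h
  simp only at h e1 e2 ⊢
  subst h
  have : j1 = j2 := by omega
  subst this
  rfl

lemma D_image (hvan : ∀ i, N₀ ≤ i → lam i = 0) (d : ℤ) :
    Prod.fst '' {p : ℕ × ℕ | p.2 < lam p.1 ∧ (p.1 : ℤ) - p.2 = d} =
      {i : ℕ | d ≤ (i : ℤ) ∧ (i : ℤ) - d < (lam i : ℤ)} := by
  ext i
  simp only [Set.mem_image, Set.mem_setOf_eq, Prod.exists]
  constructor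
  · rintro ⟨a, b, ⟨hb, he⟩, rfl⟩
    constructor <;> omega
  · rintro ⟨h1, h2⟩
    exact ⟨i, ((i : ℤ) - d).toNat, ⟨by omega, by omega⟩, rfl⟩

lemma D_finite (hvan : ∀ i, N₀ ≤ i → lam i = 0) (d : ℤ) :
    {p : ℕ × ℕ | p.2 < lam p.1 ∧ (p.1 : ℤ) - p.2 = d}.Finite := by
  apply Set.Finite.of_finite_image _ (D_injOn d)
  rw [D_image hvan d]
  exact R_finite hvan d

lemma ncard_D (hvan : ∀ i, N₀ ≤ i → lam i = 0) (d : ℤ) :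
    Set.ncard {p : ℕ × ℕ | p.2 < lam p.1 ∧ (p.1 : ℤ) - p.2 = d} = gOf lam d := by
  rw [gOf, ← D_image hvan d, Set.ncard_image_of_injOn (D_injOn d)]

lemma Mmult_pos (hvan : ∀ i, N₀ ≤ i → lam i = 0) (h2m : 2 * m = (μ : ℝ)) (c : ℤ)
    (hx : x = m + (c : ℝ)) (hxpos : 0 < x) :
    Mmult lam m x = gOf lam c + gOf lam (-c - μ) := by
  have hcμ : 1 ≤ 2 * c + μ := by
    have h0 : (0 : ℝ) < 2 * (m + c) := by linarith
    have h1 : (0 : ℝ) < ((2 * c + μ : ℤ) : ℝ) := by push_cast; linarith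
    exact_mod_cast h1
  have hsplit : {p : ℕ × ℕ | p.2 < lam p.1 ∧ |(p.1 : ℝ) - (p.2 : ℝ) + m| = x} =
      {p : ℕ × ℕ | p.2 < lam p.1 ∧ (p.1 : ℤ) - p.2 = c} ∪
      {p : ℕ × ℕ | p.2 < lam p.1 ∧ (p.1 : ℤ) - p.2 = -c - μ} := by
    ext ⟨i, j⟩
    simp only [Set.mem_setOf_eq, Set.mem_union]
    constructor
    · rintro ⟨h1, h2⟩
      rw [abs_eq (le_of_lt hxpos)] at h2
      rcases h2 with h | h
      · refine Or.inl ⟨h1, ?_⟩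
        have : ((i : ℤ) - j : ℤ) = ((c : ℤ)) := by
          have : ((i : ℝ)) - j = (c : ℝ) := by linarith
          exact_mod_cast this
        omega
      · refine Or.inr ⟨h1, ?_⟩
        have : (((i : ℤ) - j : ℤ) : ℝ) = ((-c - μ : ℤ) : ℝ) := by push_cast; linarith
        exact_mod_cast this
    · rintro (⟨h1, h⟩ | ⟨h1, h⟩) <;> refine ⟨h1, ?_⟩
      · have he : ((i : ℝ)) - j + m = x := by
          have : (((i : ℤ) - j : ℤ) : ℝ) = (c : ℝ) := by exact_mod_cast h
          push_cast at this
          linarith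
        rw [he, abs_of_pos hxpos]
      · have he : ((i : ℝ)) - j + m = -x := by
          have : (((i : ℤ) - j : ℤ) : ℝ) = ((-c - μ : ℤ) : ℝ) := by exact_mod_cast h
          push_cast at this
          linarith
        rw [he, abs_neg, abs_of_pos hxpos]
  rw [Mmult, hsplit,
    Set.ncard_union_eq ?_ (D_finite hvan c) (D_finite hvan (-c - μ)),
    ncard_D hvan, ncard_D hvan]
  rw [Set.disjoint_left]
  rintro ⟨i, j⟩ ⟨_, e1⟩ ⟨_, e2⟩
  omega

lemma Mmult_zero_int (hvan : ∀ i, N₀ ≤ i → lam i = 0) (c₀ : ℤ) (hm : m = (c₀ : ℝ)) :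
    Mmult lam m 0 = gOf lam (-c₀) := by
  have hset : {p : ℕ × ℕ | p.2 < lam p.1 ∧ |(p.1 : ℝ) - (p.2 : ℝ) + m| = 0} =
      {p : ℕ × ℕ | p.2 < lam p.1 ∧ (p.1 : ℤ) - p.2 = -c₀} := by
    ext ⟨i, j⟩
    simp only [Set.mem_setOf_eq, abs_eq_zero]
    constructor
    · rintro ⟨h1, h2⟩
      refine ⟨h1, ?_⟩
      have : (((i : ℤ) - j : ℤ) : ℝ) = ((-c₀ : ℤ) : ℝ) := by push_cast; linarith [hm]
      exact_mod_cast this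
    · rintro ⟨h1, h⟩
      refine ⟨h1, ?_⟩
      have : (((i : ℤ) - j : ℤ) : ℝ) = ((-c₀ : ℤ) : ℝ) := by exact_mod_cast h
      push_cast at this
      linarith [hm]
  rw [Mmult, hset, ncard_D hvan]
end mm

section hookl
variable {m x : ℝ} {μ B : ℤ}

lemma hook_empty {l : ℝ}
    (hx : ∀ k : ℤ, ¬(-l ≤ l - (k : ℝ) ∧ l - (k : ℝ) ≤ l ∧ |l - (k : ℝ)| = x)) :
    hookMult l x = 0 := by
  have h : {k : ℤ | -l ≤ l - (k : ℝ) ∧ l - (k : ℝ) ≤ l ∧ |l - (k : ℝ)| = x} = ∅ :=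
    Set.eq_empty_iff_forall_notMem.mpr hx
  rw [hookMult, h, Set.ncard_empty]

lemma hook_nonres (h2m : 2 * m = (μ : ℝ))
    (hx : ¬ ∃ c : ℤ, x = m + (c : ℝ)) : hookMult ((B : ℝ) + m) x = 0 := by
  apply hook_empty
  rintro k ⟨h1, h2, h3⟩
  rcases abs_choice ((B : ℝ) + m - k) with h | h <;> rw [h] at h3
  · exact hx ⟨B - k, by push_cast; linarith⟩
  · exact hx ⟨k - B - μ, by push_cast; linarith⟩

lemma hook_neg {l : ℝ} (hx : x < 0) : hookMult l x = 0 := by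
  apply hook_empty
  rintro k ⟨h1, h2, h3⟩
  have := abs_nonneg (l - (k : ℝ))
  linarith

lemma hook_zero (h2m : 2 * m = (μ : ℝ)) (c₀ : ℤ) (hm : m = (c₀ : ℝ))
    (hB : -B - μ ≤ B) : hookMult ((B : ℝ) + m) 0 = 1 := by
  have hμ : μ = 2 * c₀ := by
    have : ((μ : ℤ) : ℝ) = ((2 * c₀ : ℤ) : ℝ) := by push_cast; linarith
    exact_mod_cast this
  have hset : {k : ℤ | -((B : ℝ) + m) ≤ ((B : ℝ) + m) - k ∧ ((B : ℝ) + m) - k ≤ (B : ℝ) + m ∧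
      |((B : ℝ) + m) - k| = 0} = {B + c₀} := by
    ext k
    simp only [Set.mem_setOf_eq, Set.mem_singleton_iff, abs_eq_zero]
    constructor
    · rintro ⟨h1, h2, h3⟩
      have : ((k : ℤ) : ℝ) = ((B + c₀ : ℤ) : ℝ) := by push_cast; linarith
      exact_mod_cast this
    · rintro rfl
      have h0 : (0 : ℤ) ≤ B + c₀ := by omega
      have h0' : (0 : ℝ) ≤ ((B + c₀ : ℤ) : ℝ) := by exact_mod_cast h0
      push_cast at h0' ⊢
      refine ⟨by linarith, by linarith, by linarith⟩
  rw [hookMult, hset, Set.ncard_singleton]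

lemma hook_pos (h2m : 2 * m = (μ : ℝ)) (c : ℤ) (hx : x = m + (c : ℝ)) (hxpos : 0 < x)
    (hB : -B - μ ≤ B) : hookMult ((B : ℝ) + m) x = if c ≤ B then 2 else 0 := by
  have hcμ : 1 ≤ 2 * c + μ := by
    have h1 : (0 : ℝ) < ((2 * c + μ : ℤ) : ℝ) := by push_cast; linarith
    exact_mod_cast h1
  by_cases hcB : c ≤ B
  · rw [if_pos hcB]
    have hset : {k : ℤ | -((B : ℝ) + m) ≤ ((B : ℝ) + m) - k ∧ ((B : ℝ) + m) - k ≤ (B : ℝ) + m ∧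
        |((B : ℝ) + m) - k| = x} = {B - c, B + μ + c} := by
      ext k
      simp only [Set.mem_setOf_eq, Set.mem_insert_iff, Set.mem_singleton_iff]
      constructor
      · rintro ⟨h1, h2, h3⟩
        rw [abs_eq (le_of_lt hxpos)] at h3
        rcases h3 with h | h
        · left
          have : ((k : ℤ) : ℝ) = ((B - c : ℤ) : ℝ) := by push_cast; linarith
          exact_mod_cast this
        · right
          have : ((k : ℤ) : ℝ) = ((B + μ + c : ℤ) : ℝ) := by push_cast; linarith
          exact_mod_cast this
      · have hb1 : (0 : ℤ) ≤ B - c := by omega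
        have hb2 : B + μ + c ≤ 2 * B + μ := by omega
        have hb3 : (0 : ℤ) ≤ B + μ + c := by omega
        have hb4 : B - c ≤ 2 * B + μ := by omega
        rintro (rfl | rfl)
        · have c1 : (0 : ℝ) ≤ ((B - c : ℤ) : ℝ) := by exact_mod_cast hb1
          have c2 : ((B - c : ℤ) : ℝ) ≤ ((2 * B + μ : ℤ) : ℝ) := by exact_mod_cast hb4
          push_cast at c1 c2
          refine ⟨by push_cast; linarith, by push_cast; linarith, ?_⟩
          have he : (B : ℝ) + m - ((B : ℤ) - c : ℤ) = x := by push_cast; linarith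
          rw [he, abs_of_pos hxpos]
        · have c1 : (0 : ℝ) ≤ ((B + μ + c : ℤ) : ℝ) := by exact_mod_cast hb3
          have c2 : ((B + μ + c : ℤ) : ℝ) ≤ ((2 * B + μ : ℤ) : ℝ) := by exact_mod_cast hb2
          push_cast at c1 c2
          refine ⟨by push_cast; linarith, by push_cast; linarith, ?_⟩
          have he : (B : ℝ) + m - ((B + μ + c : ℤ) : ℝ) = -x := by push_cast; linarith
          rw [he, abs_neg, abs_of_pos hxpos]
    rw [hookMult, hset, Set.ncard_pair (by omega)]
  · rw [if_neg hcB]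
    apply hook_empty
    rintro k ⟨h1, h2, h3⟩
    rw [abs_eq (le_of_lt hxpos)] at h3
    rcases h3 with h | h
    · -- k = B - c, but h2 forces 0 ≤ k, i.e. c ≤ B
      have hk : ((k : ℤ) : ℝ) = ((B - c : ℤ) : ℝ) := by push_cast; linarith
      have hk' : k = B - c := by exact_mod_cast hk
      have h2' : (0 : ℝ) ≤ (k : ℝ) := by linarith
      have : (0 : ℤ) ≤ k := by exact_mod_cast h2'
      omega
    · -- k = B + μ + c, but h1 forces k ≤ 2B + μ, i.e. c ≤ B
      have hk : ((k : ℤ) : ℝ) = ((B + μ + c : ℤ) : ℝ) := by push_cast; linarith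
      have hk' : k = B + μ + c := by exact_mod_cast hk
      have h1' : (k : ℝ) ≤ ((2 * B + μ : ℤ) : ℝ) := by push_cast; linarith
      have : k ≤ 2 * B + μ := by exact_mod_cast h1'
      omega

lemma ind_pair {c : ℤ} (hB : -B - μ ≤ B) (hc : 1 - μ ≤ 2 * c) :
    (if -B - μ ≤ c ∧ c ≤ B then (1 : ℕ) else 0) +
      (if -B - μ ≤ -c - μ ∧ -c - μ ≤ B then (1 : ℕ) else 0) =
    if c ≤ B then 2 else 0 := by
  by_cases h : c ≤ B
  · rw [if_pos (⟨by omega, h⟩ : -B - μ ≤ c ∧ c ≤ B),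
      if_pos (⟨by omega, by omega⟩ : -B - μ ≤ -c - μ ∧ -c - μ ≤ B), if_pos h]
  · rw [if_neg (by rintro ⟨_, hh⟩; omega), if_neg (by rintro ⟨hh, _⟩; omega), if_neg h]
end hookl
lemma residual_of_norem {nu : ℕ → ℕ} {N₀ : ℕ} {m : ℝ} {μ : ℤ}
    (hμ0 : 0 ≤ μ) (h2m : 2 * m = (μ : ℝ)) (hm0 : 0 ≤ m)
    (hanti : Antitone nu) (hvan : ∀ i, N₀ ≤ i → nu i = 0)
    (hnorem : ∀ B, ¬ Removable μ (gOf nu) B) : Residual nu m := by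
  have hg : Profile (gOf nu) := profile_gOf hanti hvan
  refine ⟨?_, ?_, ?_⟩
  · -- clause (i)
    intro l hex hl0 hml
    obtain ⟨c, rfl⟩ := hex
    have hc0 : 0 ≤ c := by
      have : (0 : ℝ) ≤ (c : ℝ) := by linarith
      exact_mod_cast this
    have hM1 : Mmult nu m (m + c) = gOf nu c + gOf nu (-c - μ) :=
      Mmult_pos hvan h2m c rfl hl0
    have hM2 : Mmult nu m (m + c + 1) = gOf nu (c + 1) + gOf nu (-(c + 1) - μ) :=
      Mmult_pos hvan h2m (c + 1) (by push_cast; ring) (by linarith)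
    rw [show -(c + 1) - μ = -c - μ - 1 from by ring] at hM2
    have p1 := hg.1 c hc0
    have p2 := hg.2 (-c - μ - 1) (by omega)
    rw [show -c - μ - 1 + 1 = -c - μ from by ring] at p2
    constructor
    · omega
    · by_contra hcon
      push_neg at hcon
      apply hnorem c
      refine ⟨by omega, ?_, fun _ => by omega, fun h => by omega, by omega⟩
      intro d hd1 hd2
      rcases le_or_gt 0 d with hd | hd
      · have := profile_anti_right hg hd hd2
        omega
      · have := profile_mono_left hg hd1 (le_of_lt hd)
        omega
  · -- clause (ii)
    intro l hex hl0 hlm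
    obtain ⟨c, rfl⟩ := hex
    have hc1 : c ≤ -1 := by
      have : (c : ℝ) ≤ -1 := by linarith
      exact_mod_cast this
    have hc2 : 1 - μ ≤ 2 * c := by
      have h1 : (0 : ℝ) < ((2 * c + μ : ℤ) : ℝ) := by push_cast; linarith
      have h2 : (0 : ℤ) < 2 * c + μ := by exact_mod_cast h1
      omega
    have hM1 : Mmult nu m (m + c) = gOf nu c + gOf nu (-c - μ) :=
      Mmult_pos hvan h2m c rfl hl0
    have hM2 : Mmult nu m (m + c + 1) = gOf nu (c + 1) + gOf nu (-(c + 1) - μ) :=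
      Mmult_pos hvan h2m (c + 1) (by push_cast; ring) (by linarith)
    rw [show -(c + 1) - μ = -c - μ - 1 from by ring] at hM2
    have p1 := hg.2 c (by omega)
    have p2 := hg.2 (-c - μ - 1) (by omega)
    rw [show -c - μ - 1 + 1 = -c - μ from by ring] at p2
    constructor
    · by_contra hcon
      push_neg at hcon
      apply hnorem c
      refine ⟨by omega, ?_, fun h => by omega, fun _ => by omega, by omega⟩
      intro d hd1 hd2
      have := profile_mono_left hg hd1 (by omega)
      omega
    · omega
  · -- clause (iii)
    rintro ⟨c₀, hc₀⟩
    have hμc : μ = 2 * c₀ := by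
      have h1 : ((μ : ℤ) : ℝ) = ((2 * c₀ : ℤ) : ℝ) := by push_cast; linarith
      exact_mod_cast h1
    have hc0nn : 0 ≤ c₀ := by
      have : (0 : ℝ) ≤ (c₀ : ℝ) := by linarith
      exact_mod_cast this
    have hM0 : Mmult nu m 0 = gOf nu (-c₀) := Mmult_zero_int hvan c₀ hc₀
    have hM1 : Mmult nu m 1 = gOf nu (1 - c₀) + gOf nu (-(1 - c₀) - μ) :=
      Mmult_pos hvan h2m (1 - c₀) (by push_cast; linarith) (by norm_num)
    rw [show -(1 - c₀) - μ = -c₀ - 1 from by omega] at hM1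
    rw [show (1 - c₀ : ℤ) = -c₀ + 1 from by ring] at hM1
    have p1 := hg.2 (-c₀ - 1) (by omega)
    rw [show -c₀ - 1 + 1 = -c₀ from by ring] at p1
    constructor
    · -- m = 0
      intro hm00
      have hc00 : c₀ = 0 := by
        have : (c₀ : ℝ) = 0 := by linarith
        exact_mod_cast this
      have p2 := hg.1 0 (le_refl 0)
      rw [show (0 : ℤ) + 1 = 1 from by ring] at p2
      have a1 : gOf nu (-c₀ + 1) = gOf nu 1 := by rw [show -c₀ + 1 = 1 from by omega]
      have a2 : gOf nu (-c₀) = gOf nu 0 := by rw [show -c₀ = 0 from by omega]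
      have a3 : gOf nu (-c₀ - 1) = gOf nu (-1) := by rw [show -c₀ - 1 = -1 from by omega]
      have hexc : ¬(gOf nu 0 = gOf nu 1 + 1 ∧ gOf nu 0 = gOf nu (-1) + 1) := by
        rintro ⟨e1, e2⟩
        apply hnorem 0
        refine ⟨by omega, ?_, fun _ => ?_, fun h => by omega, ?_⟩
        · intro d hd1 hd2
          have hd : d = 0 := by omega
          subst hd
          omega
        · rw [show (0 : ℤ) + 1 = 1 from by ring]
          exact e1
        · rw [show -(0 : ℤ) - μ - 1 = -1 from by omega, show -(0 : ℤ) - μ = 0 from by omega]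
          exact e2
      by_cases e1 : gOf nu 0 = gOf nu 1 + 1
      · have e2 : gOf nu 0 ≠ gOf nu (-1) + 1 := fun h => hexc ⟨e1, h⟩
        omega
      · omega
    · -- m ≥ 1
      intro hmne
      have hc01 : 1 ≤ c₀ := by
        rcases Nat.eq_zero_or_pos c₀.toNat with h | h
        · exfalso
          apply hmne
          rw [hc₀, show c₀ = 0 from by omega]
          norm_num
        · omega
      have p2 := hg.2 (-c₀) (by omega)
      have hexc : ¬(gOf nu (-c₀ + 1) = gOf nu (-c₀) ∧
          gOf nu (-c₀) = gOf nu (-c₀ - 1) + 1) := by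
        rintro ⟨e1, e2⟩
        apply hnorem (-c₀)
        refine ⟨by omega, ?_, fun h => by omega, fun _ => e1, ?_⟩
        · intro d hd1 hd2
          have hd : d = -c₀ := by omega
          subst hd
          omega
        · rw [show -(-c₀) - μ - 1 = -c₀ - 1 from by omega, show -(-c₀) - μ = -c₀ from by omega]
          exact e2
      by_cases e1 : gOf nu (-c₀ + 1) = gOf nu (-c₀)
      · have e2 : gOf nu (-c₀) ≠ gOf nu (-c₀ - 1) + 1 := fun h => hexc ⟨e1, h⟩
        omega
      · omega

/-- for `m ≥ 0` with `2m ∈ ℤ` and a partition `lam` of `n`, there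
exist a partition `nu ⊆ lam`, of some weight `w`, whose `m`-tableau is
residual, and pairwise distinct values `l_1 > l_2 > … > l_s ≥ 0` with each
`l_i - m ∈ ℤ`, such that the multiset of entries of `T_m(λ)` equals the
multiset of entries of `T_m(ν)` together with the hook multisets `H_{l_i}`.
In particular `w = n - Σ (2 l_i + 1)`, and the numbers `2 l_i + 1` are
pairwise distinct, all odd when `m ∈ ℤ` and all even when `m ∉ ℤ`. -/
theorem stmt6 (n : ℕ) (m : ℝ) (hm0 : 0 ≤ m)
    (h2m : ∃ c : ℤ, 2 * m = (c : ℝ))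
    (lam : ℕ → ℕ) (hlam : IsPartitionOf lam n) :
    ∃ (nu : ℕ → ℕ) (w s : ℕ) (L : ℕ → ℝ),
      IsPartitionOf nu w ∧ (∀ i, nu i ≤ lam i) ∧ Residual nu m ∧
      (∀ i, i + 1 < s → L (i + 1) < L i) ∧
      (∀ i, i < s → 0 ≤ L i ∧ ∃ c : ℤ, L i - m = (c : ℝ)) ∧
      (∀ x : ℝ, Mmult lam m x =
        Mmult nu m x + ∑ i ∈ Finset.range s, hookMult (L i) x) ∧
      ((w : ℝ) = (n : ℝ) - ∑ i ∈ Finset.range s, (2 * L i + 1)) ∧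
      ((∃ c : ℤ, m = (c : ℝ)) → ∀ i < s, ∃ a : ℤ, 2 * L i + 1 = 2 * (a : ℝ) + 1) ∧
      ((¬ ∃ c : ℤ, m = (c : ℝ)) → ∀ i < s, ∃ a : ℤ, 2 * L i + 1 = 2 * (a : ℝ)) := by
  obtain ⟨hanti, N₀, hvan, hsum⟩ := hlam
  obtain ⟨μ, h2m⟩ := h2m
  have hμ0 : 0 ≤ μ := by
    have h : (0 : ℝ) ≤ ((μ : ℤ) : ℝ) := by linarith
    exact_mod_cast h
  have hgprof : Profile (gOf lam) := profile_gOf hanti hvan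
  have hgsupp : Supp (gOf lam) (N₀ + lam 0) := supp_gOf hanti hvan
  have hsum1 : ∑ d ∈ Finset.Icc (-((N₀ + lam 0 : ℕ) : ℤ)) ((N₀ + lam 0 : ℕ) : ℤ),
      gOf lam d = n := by
    rw [sum_gOf hanti hvan (le_refl (N₀ + lam 0))]
    rw [← hsum]
    exact (Finset.sum_subset (Finset.range_subset_range.mpr (by omega))
      (fun i _ hi2 => hvan i (by simpa using hi2))).symm
  obtain ⟨g', s, Bs, hp', hs', hle', hdec', hpos', hsplit', hnorem', hmax'⟩ :=
    gmain μ hμ0 (N₀ + lam 0) n (gOf lam) hgprof hgsupp hsum1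
  have hnuanti : Antitone (nuOf g') := nuOf_antitone hp' hs'
  have hnuvan : ∀ i, 2 * (N₀ + lam 0) ≤ i → nuOf g' i = 0 := nuOf_vanish hp' hs'
  have hgnu : ∀ d, gOf (nuOf g') d = g' d := gOf_nuOf hp' hs'
  have hgnufun : gOf (nuOf g') = g' := funext hgnu
  -- interior lower bounds for each hook
  have hBin : ∀ i, i < s → 1 ≤ gOf lam (Bs i) ∧ 1 ≤ gOf lam (-(Bs i) - μ) := by
    intro i hi
    have h1 := hsplit' (Bs i)
    have h2 := hsplit' (-(Bs i) - μ)
    have hposi := hpos' i hi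
    have e1 : (if -(Bs i) - μ ≤ Bs i ∧ Bs i ≤ Bs i then (1 : ℕ) else 0) ≤
        ∑ j ∈ Finset.range s, (if -(Bs j) - μ ≤ Bs i ∧ Bs i ≤ Bs j then (1 : ℕ) else 0) :=
      Finset.single_le_sum
        (f := fun j => if -(Bs j) - μ ≤ Bs i ∧ Bs i ≤ Bs j then (1 : ℕ) else 0)
        (fun j _ => Nat.zero_le _) (Finset.mem_range.mpr hi)
    have e2 : (if -(Bs i) - μ ≤ -(Bs i) - μ ∧ -(Bs i) - μ ≤ Bs i then (1 : ℕ) else 0) ≤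
        ∑ j ∈ Finset.range s,
          (if -(Bs j) - μ ≤ -(Bs i) - μ ∧ -(Bs i) - μ ≤ Bs j then (1 : ℕ) else 0) :=
      Finset.single_le_sum
        (f := fun j => if -(Bs j) - μ ≤ -(Bs i) - μ ∧ -(Bs i) - μ ≤ Bs j then (1 : ℕ) else 0)
        (fun j _ => Nat.zero_le _) (Finset.mem_range.mpr hi)
    rw [if_pos ⟨hposi, le_refl _⟩] at e1
    rw [if_pos ⟨le_refl _, hposi⟩] at e2
    omega
  have hBbd : ∀ i, i < s → |Bs i| < ((N₀ + lam 0 : ℕ) : ℤ) ∧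
      |(-(Bs i) - μ)| < ((N₀ + lam 0 : ℕ) : ℤ) := by
    intro i hi
    obtain ⟨e1, e2⟩ := hBin i hi
    have b1 := profile_bound hgprof hgsupp (Bs i) (by omega)
    have b2 := profile_bound hgprof hgsupp (-(Bs i) - μ) (by omega)
    omega
  -- weight bookkeeping
  have hper : ∀ i ∈ Finset.range s,
      (∑ d ∈ Finset.Icc (-((N₀ + lam 0 : ℕ) : ℤ)) ((N₀ + lam 0 : ℕ) : ℤ),
        (if -(Bs i) - μ ≤ d ∧ d ≤ Bs i then (1 : ℕ) else 0)) =
      (2 * Bs i + μ + 1).toNat := by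
    intro i hi
    rw [Finset.sum_boole]
    norm_cast
    rw [show (Finset.Icc (-((N₀ + lam 0 : ℕ) : ℤ)) ((N₀ + lam 0 : ℕ) : ℤ)).filter
        (fun d => -(Bs i) - μ ≤ d ∧ d ≤ Bs i) = Finset.Icc (-(Bs i) - μ) (Bs i) from by
      ext d
      simp only [Finset.mem_filter, Finset.mem_Icc]
      have hb := hBbd i (Finset.mem_range.mp hi)
      constructor
      · rintro ⟨_, h2⟩; exact h2
      · rintro ⟨h1, h2⟩
        have ha1 := abs_lt.mp hb.1
        have ha2 := abs_lt.mp hb.2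
        exact ⟨⟨by omega, by omega⟩, h1, h2⟩]
    rw [Int.card_Icc]
    congr 1
    ring
  have hkey : n = (∑ d ∈ Finset.Icc (-((N₀ + lam 0 : ℕ) : ℤ)) ((N₀ + lam 0 : ℕ) : ℤ), g' d)
      + ∑ i ∈ Finset.range s, (2 * Bs i + μ + 1).toNat := by
    rw [← hsum1, Finset.sum_congr rfl (fun d _ => hsplit' d), Finset.sum_add_distrib]
    congr 1
    rw [Finset.sum_comm]
    exact Finset.sum_congr rfl hper
  -- the weight of nu
  have hww : (∑ i ∈ Finset.range (2 * (N₀ + lam 0)), nuOf g' i) =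
      ∑ d ∈ Finset.Icc (-((N₀ + lam 0 : ℕ) : ℤ)) ((N₀ + lam 0 : ℕ) : ℤ), g' d := by
    have step1 : (∑ i ∈ Finset.range (2 * (N₀ + lam 0)), nuOf g' i) =
        ∑ i ∈ Finset.range (2 * (N₀ + lam 0) + nuOf g' 0), nuOf g' i :=
      Finset.sum_subset (Finset.range_subset_range.mpr (by omega))
        (fun i _ hi2 => hnuvan i (by simpa using hi2))
    have step2 := sum_gOf hnuanti hnuvan (le_refl (2 * (N₀ + lam 0) + nuOf g' 0))
    rw [step1, ← step2]
    have step3 : ∀ d ∈ Finset.Icc (-((2 * (N₀ + lam 0) + nuOf g' 0 : ℕ) : ℤ))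
        ((2 * (N₀ + lam 0) + nuOf g' 0 : ℕ) : ℤ), gOf (nuOf g') d = g' d :=
      fun d _ => hgnu d
    rw [Finset.sum_congr rfl step3]
    exact (Finset.sum_subset (Finset.Icc_subset_Icc (by push_cast; omega)
      (by push_cast; omega)) (fun d _ hd2 => by
        apply hs' d
        simp only [Finset.mem_Icc, not_and_or, not_le] at hd2
        rcases hd2 with h | h
        · rw [abs_of_neg (by push_cast at h ⊢; omega)]; push_cast at h ⊢; omega
        · rw [abs_of_pos (by push_cast at h ⊢; omega)]; push_cast at h ⊢; omega)).symm
  refine ⟨nuOf g', ∑ i ∈ Finset.range (2 * (N₀ + lam 0)), nuOf g' i, s,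
    fun i => (Bs i : ℝ) + m, ⟨hnuanti, 2 * (N₀ + lam 0), hnuvan, rfl⟩, ?_, ?_, ?_, ?_, ?_, ?_, ?_, ?_⟩
  · -- containment
    intro i
    by_contra hcon
    push_neg at hcon
    have h1 : lam i < nuOf g' i := hcon
    have h2 := (nu_mem_iff hp' hs' i (lam i)).mpr h1
    have h3 : min i (lam i) < gOf lam ((i : ℤ) - lam i) := by
      have := hle' ((i : ℤ) - lam i)
      omega
    have h4 := (box_crit hanti hvan i (lam i)).mpr h3
    omega
  · -- residual
    apply residual_of_norem hμ0 h2m hm0 hnuanti hnuvan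
    rw [hgnufun]
    exact hnorem'
  · -- decreasing
    intro i hi
    show (Bs (i + 1) : ℝ) + m < (Bs i : ℝ) + m
    have h := hdec' i hi
    have h' : ((Bs (i + 1) : ℤ) : ℝ) < ((Bs i : ℤ) : ℝ) := by exact_mod_cast h
    linarith
  · -- nonneg and integrality
    intro i hi
    dsimp only
    constructor
    · have h1 : (0 : ℤ) ≤ 2 * Bs i + μ := by have := hpos' i hi; omega
      have h2 : (0 : ℝ) ≤ ((2 * Bs i + μ : ℤ) : ℝ) := by exact_mod_cast h1
      push_cast at h2
      linarith
    · exact ⟨Bs i, by ring⟩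
  · -- mass identity
    dsimp only
    intro x
    by_cases hres : ∃ c : ℤ, x = m + (c : ℝ)
    · obtain ⟨c, rfl⟩ := hres
      rcases lt_trichotomy (m + (c : ℝ)) 0 with hx | hx | hx
      · rw [Mmult_neg hx, Mmult_neg hx, Finset.sum_eq_zero (fun i _ => hook_neg hx)]
        simp
      · -- x = 0 case (m integer)
        have hm' : m = ((-c : ℤ) : ℝ) := by push_cast; linarith
        have hμc : μ = 2 * (-c) := by
          have h1 : ((μ : ℤ) : ℝ) = ((2 * (-c) : ℤ) : ℝ) := by push_cast; linarith
          exact_mod_cast h1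
        rw [hx, Mmult_zero_int hvan (-c) hm', Mmult_zero_int hnuvan (-c) hm']
        simp only [neg_neg]
        rw [hgnu c]
        have hhooks : ∀ i ∈ Finset.range s, hookMult ((Bs i : ℝ) + m) 0 =
            (if -(Bs i) - μ ≤ c ∧ c ≤ Bs i then (1 : ℕ) else 0) := by
          intro i hi
          rw [hook_zero h2m (-c) hm' (hpos' i (Finset.mem_range.mp hi))]
          rw [if_pos ?_]
          have := hpos' i (Finset.mem_range.mp hi)
          constructor <;> omega
        rw [Finset.sum_congr rfl hhooks]
        exact hsplit' c
      · -- x > 0 case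
        have hc2 : 1 - μ ≤ 2 * c := by
          have h1 : (0 : ℝ) < ((2 * c + μ : ℤ) : ℝ) := by push_cast; linarith
          have h2 : (0 : ℤ) < 2 * c + μ := by exact_mod_cast h1
          omega
        rw [Mmult_pos hvan h2m c rfl hx, Mmult_pos hnuvan h2m c rfl hx,
          hgnu c, hgnu (-c - μ)]
        have hhooks : ∀ i ∈ Finset.range s, hookMult ((Bs i : ℝ) + m) (m + (c : ℝ)) =
            (if -(Bs i) - μ ≤ c ∧ c ≤ Bs i then (1 : ℕ) else 0) +
            (if -(Bs i) - μ ≤ -c - μ ∧ -c - μ ≤ Bs i then (1 : ℕ) else 0) := by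
          intro i hi
          rw [hook_pos h2m c rfl hx (hpos' i (Finset.mem_range.mp hi))]
          exact (ind_pair (hpos' i (Finset.mem_range.mp hi)) hc2).symm
        rw [Finset.sum_congr rfl hhooks, Finset.sum_add_distrib]
        have e1 := hsplit' c
        have e2 := hsplit' (-c - μ)
        omega
    · rw [Mmult_nonres h2m hres, Mmult_nonres h2m hres,
        Finset.sum_eq_zero (fun i _ => hook_nonres h2m hres)]
      simp
  · -- weight equation
    dsimp only
    have hkey2 : n = (∑ i ∈ Finset.range (2 * (N₀ + lam 0)), nuOf g' i) +
        ∑ i ∈ Finset.range s, (2 * Bs i + μ + 1).toNat := by omega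
    have hcast : ((∑ i ∈ Finset.range s, (2 * Bs i + μ + 1).toNat : ℕ) : ℝ) =
        ∑ i ∈ Finset.range s, (2 * ((Bs i : ℝ) + m) + 1) := by
      push_cast
      apply Finset.sum_congr rfl
      intro i hi
      have h1 : (0 : ℤ) ≤ 2 * Bs i + μ + 1 := by
        have := hpos' i (Finset.mem_range.mp hi); omega
      have h2 : ((2 * Bs i + μ + 1).toNat : ℝ) = ((2 * Bs i + μ + 1 : ℤ) : ℝ) := by
        exact_mod_cast Int.toNat_of_nonneg h1
      rw [h2]
      push_cast
      linarith
    have hcast2 : (n : ℝ) = ((∑ i ∈ Finset.range (2 * (N₀ + lam 0)), nuOf g' i : ℕ) : ℝ) +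
        ((∑ i ∈ Finset.range s, (2 * Bs i + μ + 1).toNat : ℕ) : ℝ) := by
      exact_mod_cast congrArg (fun k : ℕ => (k : ℝ)) hkey2
    rw [hcast] at hcast2
    linarith
  · -- odd case
    rintro ⟨c₀, hc₀⟩ i hi
    dsimp only
    exact ⟨Bs i + c₀, by push_cast; linarith⟩
  · -- even case
    intro hnem i hi
    dsimp only
    rcases Int.even_or_odd μ with ⟨k, hk⟩ | ⟨k, hk⟩
    · exfalso
      exact hnem ⟨k, by push_cast [hk] at h2m ⊢; linarith⟩
    · exact ⟨Bs i + k + 1, by push_cast [hk] at h2m ⊢; linarith⟩
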